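/- There exist a flow network G=(V,E) with nodes s,t and lifted graph G'=(V',E') as above, and a pair (y,y') ∈ [0,1]^E × [0,1]^{E'} that satisfies all lifted path-induced cut inequalities but violates some symmetric lifted path-induced cut inequality. Hence the lifted path-induced cut inequalities together with their symmetric counterparts define a strictly tighter relaxation than the lifted path-induced cut inequalities alone. -/

import Mathlib

open Finset
open scoped Classical

section LiftedDisjointPaths

variable {V : Type*} [Fintype V] [DecidableEq V]

/-- A `vw`-path in the digraph with edge set `E`, given by its (nonempty) list of vertices:
it starts at `v`, ends at `w`, and consecutive vertices are joined by edges of `E`. -/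
def IsPath (E : Finset (V × V)) (v w : V) (p : List V) : Prop :=
  p ≠ [] ∧ p.head? = some v ∧ p.getLast? = some w ∧ p.Chain' (fun a b => (a, b) ∈ E)

/-- The edge list `P_E` of a path given by its vertex list. -/
def pEdges (p : List V) : List (V × V) := p.zip p.tail

/-- The reachability relation `R`: `vw ∈ R` iff `v = w` or there is a `vw`-path in `G`. -/
def Reach (E : Finset (V × V)) (v w : V) : Prop :=
  v = w ∨ ∃ p, IsPath E v w p

/-- `G = (V,E)` is a flow network with source `s` and sink `t`: it is acyclic, every node is
reachable from `s`, and `t` is reachable from every node. -/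
structure IsFlowNetwork (E : Finset (V × V)) (s t : V) : Prop where
  acyclic : ∀ v w : V, (v, w) ∈ E → ¬ Reach E w v
  reach_from_source : ∀ v : V, Reach E s v
  reach_to_sink : ∀ v : V, Reach E v t

/-- The lifted graph `G' = (V', E')` has node set `V' = V ∖ {s,t}`. -/
def IsLiftedGraph (E' : Finset (V × V)) (s t : V) : Prop :=
  ∀ e ∈ E', e.1 ≠ s ∧ e.1 ≠ t ∧ e.2 ≠ s ∧ e.2 ≠ t

/-- `y ∈ [0,1]^E`. -/
def InUnitBox (E : Finset (V × V)) (y : V × V → ℝ) : Prop :=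
  ∀ e ∈ E, 0 ≤ y e ∧ y e ≤ 1

/-! ### Paths in the multigraph `G ∪ G'` -/

/-- Vertex list `P_V` of a path in `G ∪ G'` starting at `v`; each step of `q` records the next
vertex together with a flag saying whether the edge used is a lifted edge. -/
def mVerts (v : V) (q : List (V × Bool)) : List V := v :: q.map Prod.fst

/-- The labelled edge list of a path in `G ∪ G'`. -/
def mEdges (v : V) (q : List (V × Bool)) : List ((V × V) × Bool) :=
  List.zipWith (fun a ub => ((a, ub.1), ub.2)) (mVerts v q) q

/-- `P_E`: the set of base edges of a path in `G ∪ G'`. -/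
def mBase (v : V) (q : List (V × Bool)) : Finset (V × V) :=
  ((mEdges v q).filterMap fun eb => if eb.2 then none else some eb.1).toFinset

/-- `P_{E'}`: the set of lifted edges of a path in `G ∪ G'`. -/
def mLifted (v : V) (q : List (V × Bool)) : Finset (V × V) :=
  ((mEdges v q).filterMap fun eb => if eb.2 then some eb.1 else none).toFinset

/-- A `vw`-path in the multigraph `G ∪ G'`: it starts at `v`, ends at `w`, each base step uses
an edge of `E`, each lifted step uses an edge of `E'`, and the sets of base and lifted edges
used are disjoint. -/
def IsMPath (E E' : Finset (V × V)) (v w : V) (q : List (V × Bool)) : Prop :=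
  (mVerts v q).getLast? = some w ∧
  (∀ eb ∈ mEdges v q, if eb.2 then eb.1 ∈ E' else eb.1 ∈ E) ∧
  Disjoint (mBase v q) (mLifted v q)

/-! ### The families of linear inequalities -/

/-- All path inequalities: for every lifted edge `vw ∈ E'` and every `vw`-path `P` in `G`,
`y'_{vw} ≥ Σ_{j ∈ P_V : vj ∈ E} y_{vj} − Σ_{i ∈ P_V∖{v,w}} Σ_{k ∉ P_V : ik ∈ E} y_{ik}`. -/
def PathIneqs (E E' : Finset (V × V)) (y y' : V × V → ℝ) : Prop :=
  ∀ v w : V, (v, w) ∈ E' → ∀ p : List V, IsPath E v w p →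
    (∑ j ∈ p.toFinset.filter (fun j => (v, j) ∈ E), y (v, j))
      - (∑ i ∈ p.toFinset \ {v, w},
          ∑ k ∈ (univ \ p.toFinset).filter (fun k => (i, k) ∈ E), y (i, k))
    ≤ y' (v, w)

/-- All lifted multicut path inequalities: for every lifted edge `vw ∈ E'` and every
`vw`-path `P` in `G`, `y'_{vw} ≥ Σ_{ij ∈ P_E} (y_{ij} − 1) + 1`. -/
def MulticutPathIneqs (E E' : Finset (V × V)) (y y' : V × V → ℝ) : Prop :=
  ∀ v w : V, (v, w) ∈ E' → ∀ p : List V, IsPath E v w p →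
    (∑ e ∈ (pEdges p).toFinset, (y e - 1)) + 1 ≤ y' (v, w)

/-- All lifted path inequalities: for every lifted edge `vw ∈ E'` and every `vw`-path `P` in
`G ∪ G'`, `y'_{vw} ≥ Σ_{j ∈ P_V : vj∈E} y_{vj} − Σ_{i ∈ P_V∖{v,w}} Σ_{k ∉ P_V : ik∈E} y_{ik}
+ Σ_{ij ∈ P_{E'}} y'_{ij} − Σ_{ij ∈ P_{E'} : ij∈E} y_{ij}`. -/
def LiftedPathIneqs (E E' : Finset (V × V)) (y y' : V × V → ℝ) : Prop :=
  ∀ v w : V, (v, w) ∈ E' → ∀ q : List (V × Bool), IsMPath E E' v w q →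
    (∑ j ∈ (mVerts v q).toFinset.filter (fun j => (v, j) ∈ E), y (v, j))
      - (∑ i ∈ (mVerts v q).toFinset \ {v, w},
          ∑ k ∈ (univ \ (mVerts v q).toFinset).filter (fun k => (i, k) ∈ E), y (i, k))
      + (∑ e ∈ mLifted v q, y' e)
      - (∑ e ∈ (mLifted v q).filter (fun e => e ∈ E), y e)
    ≤ y' (v, w)

/-- All path-induced cut inequalities: for every lifted edge `vw ∈ E'`, every node `u` with
`uw ∈ R` and `u ≠ w`, and every `vu`-path `P` in `G`,
`y'_{vw} ≤ Σ_{i ∈ P_V} Σ_{k ∉ P_V : ik∈E, kw∈R} y_{ik}`. -/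
def PathCutIneqs (E E' : Finset (V × V)) (y y' : V × V → ℝ) : Prop :=
  ∀ v w : V, (v, w) ∈ E' → ∀ u : V, Reach E u w → u ≠ w → ∀ p : List V, IsPath E v u p →
    y' (v, w) ≤
      ∑ i ∈ p.toFinset,
        ∑ k ∈ (univ \ p.toFinset).filter (fun k => (i, k) ∈ E ∧ Reach E k w), y (i, k)

/-- All lifted path-induced cut inequalities: for every lifted edge `vw ∈ E'`, every node `u`
with `uw ∈ R` and `u ≠ w`, and every `vu`-path `P` in `G ∪ G'`,
`y'_{vw} ≤ Σ_{i ∈ P_V} Σ_{k ∉ P_V : ik∈E, kw∈R} y_{ik} − Σ_{ij ∈ P_{E'}} y'_{ij}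
+ Σ_{ij ∈ P_{E'} : ij∈E} y_{ij}`. -/
def LiftedPathCutIneqs (E E' : Finset (V × V)) (y y' : V × V → ℝ) : Prop :=
  ∀ v w : V, (v, w) ∈ E' → ∀ u : V, Reach E u w → u ≠ w →
    ∀ q : List (V × Bool), IsMPath E E' v u q →
    y' (v, w) ≤
      (∑ i ∈ (mVerts v q).toFinset,
        ∑ k ∈ (univ \ (mVerts v q).toFinset).filter (fun k => (i, k) ∈ E ∧ Reach E k w),
          y (i, k))
      - (∑ e ∈ mLifted v q, y' e)
      + (∑ e ∈ (mLifted v q).filter (fun e => e ∈ E), y e)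

/-- All strengthened lifted path-induced cut inequalities: for every lifted edge `vw ∈ E'`
and every `vu`-path `P` in `G ∪ G'` with `uw ∈ E'`,
`y'_{vw} ≤ Σ_{i ∈ P_V∖{u}} Σ_{k ∉ P_V : ik∈E, kw∈R} y_{ik} − Σ_{ij ∈ P_{E'}} y'_{ij}
+ Σ_{ij ∈ P_{E'} : ij∈E} y_{ij} + y'_{uw}`. -/
def StrongLiftedPathCutIneqs (E E' : Finset (V × V)) (y y' : V × V → ℝ) : Prop :=
  ∀ v w : V, (v, w) ∈ E' → ∀ u : V, (u, w) ∈ E' →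
    ∀ q : List (V × Bool), IsMPath E E' v u q →
    y' (v, w) ≤
      (∑ i ∈ (mVerts v q).toFinset \ {u},
        ∑ k ∈ (univ \ (mVerts v q).toFinset).filter (fun k => (i, k) ∈ E ∧ Reach E k w),
          y (i, k))
      - (∑ e ∈ mLifted v q, y' e)
      + (∑ e ∈ (mLifted v q).filter (fun e => e ∈ E), y e)
      + y' (u, w)

/-- All symmetric path-induced cut inequalities: for every lifted edge `vw ∈ E'`, every node
`u` with `vu ∈ R` and `u ≠ v`, and every `uw`-path `P` in `G`,
`y'_{vw} ≤ Σ_{i ∈ P_V} Σ_{k ∉ P_V : ki∈E, vk∈R} y_{ki}`. -/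
def SymPathCutIneqs (E E' : Finset (V × V)) (y y' : V × V → ℝ) : Prop :=
  ∀ v w : V, (v, w) ∈ E' → ∀ u : V, Reach E v u → u ≠ v → ∀ p : List V, IsPath E u w p →
    y' (v, w) ≤
      ∑ i ∈ p.toFinset,
        ∑ k ∈ (univ \ p.toFinset).filter (fun k => (k, i) ∈ E ∧ Reach E v k), y (k, i)

/-- All symmetric lifted path-induced cut inequalities: for every lifted edge `vw ∈ E'`,
every node `u` with `vu ∈ R` and `u ≠ v`, and every `uw`-path `P` in `G ∪ G'`,
`y'_{vw} ≤ Σ_{i ∈ P_V} Σ_{k ∉ P_V : ki∈E, vk∈R} y_{ki} − Σ_{ij ∈ P_{E'}} y'_{ij}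
+ Σ_{ij ∈ P_{E'} : ij∈E} y_{ij}`. -/
def SymLiftedPathCutIneqs (E E' : Finset (V × V)) (y y' : V × V → ℝ) : Prop :=
  ∀ v w : V, (v, w) ∈ E' → ∀ u : V, Reach E v u → u ≠ v →
    ∀ q : List (V × Bool), IsMPath E E' u w q →
    y' (v, w) ≤
      (∑ i ∈ (mVerts u q).toFinset,
        ∑ k ∈ (univ \ (mVerts u q).toFinset).filter (fun k => (k, i) ∈ E ∧ Reach E v k),
          y (k, i))
      - (∑ e ∈ mLifted u q, y' e)
      + (∑ e ∈ (mLifted u q).filter (fun e => e ∈ E), y e)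

/-- All strengthened symmetric lifted path-induced cut inequalities: for every lifted edge
`vw ∈ E'` and every `uw`-path `P` in `G ∪ G'` with `vu ∈ E'`,
`y'_{vw} ≤ Σ_{i ∈ P_V∖{u}} Σ_{k ∉ P_V : ki∈E, vk∈R} y_{ki} − Σ_{ij ∈ P_{E'}} y'_{ij}
+ Σ_{ij ∈ P_{E'} : ij∈E} y_{ij} + y'_{vu}`. -/
def StrongSymLiftedPathCutIneqs (E E' : Finset (V × V)) (y y' : V × V → ℝ) : Prop :=
  ∀ v w : V, (v, w) ∈ E' → ∀ u : V, (v, u) ∈ E' →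
    ∀ q : List (V × Bool), IsMPath E E' u w q →
    y' (v, w) ≤
      (∑ i ∈ (mVerts u q).toFinset \ {u},
        ∑ k ∈ (univ \ (mVerts u q).toFinset).filter (fun k => (k, i) ∈ E ∧ Reach E v k),
          y (k, i))
      - (∑ e ∈ mLifted u q, y' e)
      + (∑ e ∈ (mLifted u q).filter (fun e => e ∈ E), y e)
      + y' (v, u)

/-- The two single node cut inequalities for every lifted edge `vw ∈ E'`:
`y'_{vw} ≤ Σ_{u : vu∈E, uw∈R} y_{vu}` and `y'_{vw} ≤ Σ_{u : uw∈E, vu∈R} y_{uw}`. -/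
def SingleNodeCutIneqs (E E' : Finset (V × V)) (y y' : V × V → ℝ) : Prop :=
  ∀ v w : V, (v, w) ∈ E' →
    (y' (v, w) ≤ ∑ u ∈ univ.filter (fun u => (v, u) ∈ E ∧ Reach E u w), y (v, u)) ∧
    (y' (v, w) ≤ ∑ u ∈ univ.filter (fun u => (u, w) ∈ E ∧ Reach E v u), y (u, w))

/-- A feasible integral solution `(x,y,y')` of the lifted disjoint paths problem:
`x,y,y'` are binary, flow conservation holds at every node other than `s` and `t`, and a
lifted edge is active iff there is an active path in `G` between its endpoints. -/
def FeasibleIntegral (E E' : Finset (V × V)) (s t : V)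
    (x : V → ℝ) (y y' : V × V → ℝ) : Prop :=
  (∀ v : V, x v = 0 ∨ x v = 1) ∧
  (∀ e ∈ E, y e = 0 ∨ y e = 1) ∧
  (∀ e ∈ E', y' e = 0 ∨ y' e = 1) ∧
  (∀ v : V, v ≠ s → v ≠ t →
    (∑ u ∈ univ.filter (fun u => (u, v) ∈ E), y (u, v)) = x v ∧
    (∑ w ∈ univ.filter (fun w => (v, w) ∈ E), y (v, w)) = x v) ∧
  (∀ v w : V, (v, w) ∈ E' →
    (y' (v, w) = 1 ↔ ∃ p : List V, IsPath E v w p ∧ ∀ e ∈ pEdges p, y e = 1))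

end LiftedDisjointPaths


namespace Cex6

def E0 : Finset (Fin 6 × Fin 6) :=
  {(0,1),(0,2),(0,3),(0,4),(0,5),(1,5),(2,5),(3,5),(4,5),(1,2),(1,3),(2,3),(3,4)}

def E1 : Finset (Fin 6 × Fin 6) := {(1,4),(2,4)}

def Y : Fin 6 × Fin 6 → ℤ := fun e => if e = (1,2) ∨ e = (1,3) then 1 else 2

noncomputable def y : Fin 6 × Fin 6 → ℝ := fun e => (Y e : ℝ) / 2

noncomputable def y' : Fin 6 × Fin 6 → ℝ := fun _ => 1

lemma edge_lt : ∀ e ∈ E0, e.1 < e.2 := by decide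
lemma edge_lt' : ∀ e ∈ E1, e.1 < e.2 := by decide

lemma head_le {l : List (Fin 6)} (h : l.Chain' (· < ·)) {a : Fin 6}
    (ha : l.head? = some a) : ∀ x ∈ l, a ≤ x := by
  induction l generalizing a with
  | nil => simp at ha
  | cons c t ih =>
    have hac : c = a := by simpa using ha
    subst hac
    intro x hx
    rcases List.mem_cons.1 hx with rfl | hx
    · exact le_refl _
    · cases t with
      | nil => simp at hx
      | cons d t' =>
        have h1 := List.isChain_cons_cons.1 h
        exact le_trans (le_of_lt h1.1) (ih h1.2 rfl x hx)

lemma le_last {l : List (Fin 6)} (h : l.Chain' (· < ·)) {b : Fin 6}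
    (hb : l.getLast? = some b) : ∀ x ∈ l, x ≤ b := by
  induction l with
  | nil => simp at hb
  | cons c t ih =>
    cases t with
    | nil =>
      have : c = b := by simpa using hb
      subst this
      intro x hx
      rcases List.mem_cons.1 hx with rfl | hx
      · exact le_refl _
      · simp at hx
    | cons d t' =>
      have hb' : (d :: t').getLast? = some b := by
        rwa [List.getLast?_cons_cons] at hb
      have h1 := List.isChain_cons_cons.1 h
      have ihs := ih h1.2 hb'
      intro x hx
      rcases List.mem_cons.1 hx with rfl | hx
      · exact le_trans (le_of_lt h1.1) (ihs d (List.mem_cons_self))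
      · exact ihs x hx

lemma mVerts_cons (v : Fin 6) (ub : Fin 6 × Bool) (q : List (Fin 6 × Bool)) :
    mVerts v (ub :: q) = v :: mVerts ub.1 q := rfl

lemma mEdges_cons (v : Fin 6) (ub : Fin 6 × Bool) (q : List (Fin 6 × Bool)) :
    mEdges v (ub :: q) = ((v, ub.1), ub.2) :: mEdges ub.1 q := rfl

lemma mchain {v : Fin 6} {q : List (Fin 6 × Bool)}
    (hE : ∀ eb ∈ mEdges v q, if eb.2 then eb.1 ∈ E1 else eb.1 ∈ E0) :
    (mVerts v q).Chain' (· < ·) := by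
  induction q generalizing v with
  | nil => exact List.isChain_singleton v
  | cons ub q ih =>
    have h1 := hE ((v, ub.1), ub.2) (by rw [mEdges_cons]; exact List.mem_cons_self)
    have hlt : v < ub.1 := by
      rcases hub : ub.2 with _ | _
      · rw [hub] at h1; simp only [if_neg Bool.false_ne_true] at h1
        exact edge_lt (v, ub.1) h1
      · rw [hub] at h1; simp only [if_pos rfl] at h1
        exact edge_lt' (v, ub.1) h1
    have h2 := ih (v := ub.1) (fun eb heb => hE eb (by
      rw [mEdges_cons]; exact List.mem_cons_of_mem _ heb))
    show List.Chain' (· < ·) (v :: ub.1 :: q.map Prod.fst)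
    exact List.isChain_cons_cons.2 ⟨hlt, h2⟩

lemma mem_mEdges {v : Fin 6} {q : List (Fin 6 × Bool)} :
    ∀ eb ∈ mEdges v q, eb.1.1 ∈ mVerts v q ∧ eb.1.2 ∈ mVerts v q := by
  induction q generalizing v with
  | nil => intro eb h; simp [mEdges, mVerts] at h
  | cons ub q ih =>
    intro eb heb
    rw [mEdges_cons] at heb
    rw [mVerts_cons]
    rcases List.mem_cons.1 heb with rfl | h
    · exact ⟨List.mem_cons_self,
        List.mem_cons_of_mem _ (by show ub.1 ∈ ub.1 :: _; exact List.mem_cons_self)⟩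
    · exact ⟨List.mem_cons_of_mem _ (ih eb h).1, List.mem_cons_of_mem _ (ih eb h).2⟩

lemma mem_mLifted {v : Fin 6} {q : List (Fin 6 × Bool)} {e : Fin 6 × Fin 6}
    (he : e ∈ mLifted v q) : (e, true) ∈ mEdges v q := by
  rw [mLifted, List.mem_toFinset, List.mem_filterMap] at he
  obtain ⟨eb, hm, hs⟩ := he
  rcases hb : eb.2 with _ | _
  · rw [hb] at hs; simp at hs
  · rw [hb] at hs; simp only [if_pos rfl, Option.some.injEq] at hs
    have heq : eb = (e, true) := by
      cases eb with
      | mk a b => simp at hs hb; rw [hs] at *; rw [hb]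
    rwa [heq] at hm

lemma isPath_two {a b : Fin 6} (h : (a,b) ∈ E0) : IsPath E0 a b [a,b] :=
  ⟨by simp, by simp, by simp, by simp [List.Chain', List.isChain_cons_cons, h]⟩

lemma isPath_three {a b c : Fin 6} (h1 : (a,b) ∈ E0) (h2 : (b,c) ∈ E0) :
    IsPath E0 a c [a,b,c] :=
  ⟨by simp, by simp, by simp, by simp [List.Chain', List.isChain_cons_cons, h1, h2]⟩

lemma reach_of_mem {a b : Fin 6} (h : (a,b) ∈ E0) : Reach E0 a b :=
  Or.inr ⟨_, isPath_two h⟩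

lemma reach_iff (a b : Fin 6) : Reach E0 a b ↔ a ≤ b := by
  constructor
  · rintro (rfl | ⟨p, hne, hh, hl, hc⟩)
    · exact le_refl _
    · have hchain : p.Chain' (· < ·) := hc.imp (fun {x y} hxy => edge_lt (x, y) hxy)
      have hbm : b ∈ p := List.mem_of_mem_getLast? hl
      exact head_le hchain hh b hbm
  · intro hab
    rcases eq_or_lt_of_le hab with rfl | h
    · exact Or.inl rfl
    by_cases he : (a,b) ∈ E0
    · exact reach_of_mem he
    · have key : ∀ x y : Fin 6, x < y → (x,y) ∉ E0 →
          (x = 1 ∧ y = 4) ∨ (x = 2 ∧ y = 4) := by decide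
      rcases key a b h he with ⟨rfl, rfl⟩ | ⟨rfl, rfl⟩
      · exact Or.inr ⟨_, isPath_three (by decide : ((1:Fin 6),(3:Fin 6)) ∈ E0) (by decide)⟩
      · exact Or.inr ⟨_, isPath_three (by decide : ((2:Fin 6),(3:Fin 6)) ∈ E0) (by decide)⟩

set_option maxHeartbeats 1000000 in
lemma core14 : ∀ S : Finset (Fin 6), 1 ∈ S → (∀ x ∈ S, x ≤ 3) →
    (2:ℤ) ≤ ∑ i ∈ S, ∑ k ∈ (univ \ S).filter (fun k => (i,k) ∈ E0 ∧ k ≤ 4), Y (i,k) := by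
  decide

set_option maxHeartbeats 1000000 in
lemma core24 : ∀ S : Finset (Fin 6), 2 ∈ S → (∀ x ∈ S, x ≤ 3) →
    (2:ℤ) ≤ ∑ i ∈ S, ∑ k ∈ (univ \ S).filter (fun k => (i,k) ∈ E0 ∧ k ≤ 4), Y (i,k) := by
  decide

lemma forward : LiftedPathCutIneqs E0 E1 y y' := by
  intro v w hvw u hRuw hune q hq
  obtain ⟨hlast, hedges, hdisj⟩ := hq
  have hkey : ∀ p ∈ E1, (p.1 = 1 ∨ p.1 = 2) ∧ p.2 = 4 := by decide
  obtain ⟨hv, hw4⟩ := hkey (v, w) hvw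
  subst hw4
  have hchain := mchain hedges
  have hub : ∀ x ∈ mVerts v q, x ≤ u := le_last hchain hlast
  have hu4 : u ≤ (4:Fin 6) := (reach_iff u 4).1 hRuw
  have hu3 : u ≤ (3:Fin 6) := by
    have : ∀ a : Fin 6, a ≤ 4 → a ≠ 4 → a ≤ 3 := by decide
    exact this u hu4 hune
  have hbound : ∀ x ∈ (mVerts v q).toFinset, x ≤ (3:Fin 6) :=
    fun x hx => le_trans (hub x (List.mem_toFinset.1 hx)) hu3
  have hvin : v ∈ (mVerts v q).toFinset := by
    rw [List.mem_toFinset]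
    show v ∈ v :: _
    exact List.mem_cons_self
  have hLempty : mLifted v q = ∅ := by
    rw [Finset.eq_empty_iff_forall_notMem]
    intro e he
    have hm := mem_mLifted he
    have he1 : e ∈ E1 := by
      have := hedges _ hm
      simpa using this
    have h42 : e.2 = (4:Fin 6) := (hkey e he1).2
    have h4m : (4:Fin 6) ∈ mVerts v q := h42 ▸ (mem_mEdges _ hm).2
    have h4u : (4:Fin 6) ≤ u := hub _ h4m
    have : ∀ a : Fin 6, (4:Fin 6) ≤ a → a ≤ 3 → False := by decide
    exact this u h4u hu3
  rw [hLempty]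
  simp only [Finset.sum_empty, Finset.filter_empty, sub_zero, add_zero]
  show (1:ℝ) ≤ _
  have hf : ∀ i : Fin 6,
      ((univ \ (mVerts v q).toFinset).filter (fun k => (i,k) ∈ E0 ∧ Reach E0 k 4)) =
      ((univ \ (mVerts v q).toFinset).filter (fun k => (i,k) ∈ E0 ∧ k ≤ 4)) :=
    fun i => Finset.filter_congr (fun k _ => by rw [reach_iff])
  have hz : (2:ℤ) ≤ ∑ i ∈ (mVerts v q).toFinset,
      ∑ k ∈ (univ \ (mVerts v q).toFinset).filter (fun k => (i,k) ∈ E0 ∧ k ≤ 4), Y (i,k) := by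
    rcases hv with rfl | rfl
    · exact core14 _ hvin hbound
    · exact core24 _ hvin hbound
  have hfinal : (1:ℝ) ≤ ∑ i ∈ (mVerts v q).toFinset,
      ∑ k ∈ (univ \ (mVerts v q).toFinset).filter (fun k => (i,k) ∈ E0 ∧ k ≤ 4), y (i,k) := by
    have hcast : (((∑ i ∈ (mVerts v q).toFinset,
        ∑ k ∈ (univ \ (mVerts v q).toFinset).filter (fun k => (i,k) ∈ E0 ∧ k ≤ 4),
          Y (i,k)) : ℤ) : ℝ) =
        ∑ i ∈ (mVerts v q).toFinset,
        ∑ k ∈ (univ \ (mVerts v q).toFinset).filter (fun k => (i,k) ∈ E0 ∧ k ≤ 4),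
          ((Y (i,k) : ℝ)) := by
      push_cast
      rfl
    have h2r : (2:ℝ) ≤ ∑ i ∈ (mVerts v q).toFinset,
        ∑ k ∈ (univ \ (mVerts v q).toFinset).filter (fun k => (i,k) ∈ E0 ∧ k ≤ 4),
          ((Y (i,k) : ℝ)) := by
      rw [← hcast]
      exact_mod_cast hz
    have hysum : ∑ i ∈ (mVerts v q).toFinset,
        ∑ k ∈ (univ \ (mVerts v q).toFinset).filter (fun k => (i,k) ∈ E0 ∧ k ≤ 4), y (i,k)
        = (∑ i ∈ (mVerts v q).toFinset,
          ∑ k ∈ (univ \ (mVerts v q).toFinset).filter (fun k => (i,k) ∈ E0 ∧ k ≤ 4),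
            ((Y (i,k) : ℝ))) / 2 := by
      rw [Finset.sum_div]
      refine Finset.sum_congr rfl fun i _ => ?_
      rw [Finset.sum_div]
      rfl
    rw [hysum]
    linarith
  exact hfinal.trans_eq
    (Finset.sum_congr rfl fun i _ => Finset.sum_congr (hf i).symm fun _ _ => rfl)

lemma violation : ¬ SymLiftedPathCutIneqs E0 E1 y y' := by
  intro h
  have hmp : IsMPath E0 E1 2 4 [((4:Fin 6), true)] := ⟨by decide, by decide, by decide⟩
  have h2 := h 1 4 (by decide) 2 (reach_of_mem (by decide)) (by decide)
    [((4:Fin 6), true)] hmp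
  have hS : (mVerts (2:Fin 6) [((4:Fin 6), true)]).toFinset = {2, 4} := by decide
  have hL : mLifted (2:Fin 6) [((4:Fin 6), true)] = {((2:Fin 6), (4:Fin 6))} := by decide
  rw [hS, hL] at h2
  rw [show ({((2:Fin 6), (4:Fin 6))} : Finset (Fin 6 × Fin 6)).filter (fun e => e ∈ E0) = ∅
    from by decide] at h2
  have hf : ∀ i : Fin 6,
      ((univ \ ({2,4} : Finset (Fin 6))).filter (fun k => (k,i) ∈ E0 ∧ Reach E0 1 k)) =
      ((univ \ ({2,4} : Finset (Fin 6))).filter (fun k => (k,i) ∈ E0 ∧ 1 ≤ k)) :=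
    fun i => Finset.filter_congr (fun k _ => by rw [reach_iff])
  rw [Finset.sum_congr rfl (fun i (_ : i ∈ ({2,4} : Finset (Fin 6))) => by rw [hf i])] at h2
  rw [Finset.sum_pair (by decide : (2:Fin 6) ≠ 4)] at h2
  rw [show ((univ \ ({2,4} : Finset (Fin 6))).filter
        (fun k => (k,(2:Fin 6)) ∈ E0 ∧ 1 ≤ k)) = {1} from by decide,
      show ((univ \ ({2,4} : Finset (Fin 6))).filter
        (fun k => (k,(4:Fin 6)) ∈ E0 ∧ 1 ≤ k)) = {3} from by decide] at h2
  simp only [Finset.sum_singleton, Finset.sum_empty] at h2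
  rw [show y ((1:Fin 6),(2:Fin 6)) = 1/2 from by norm_num [y, Y],
      show y ((3:Fin 6),(4:Fin 6)) = 1 from by
        simp only [y, Y]; rw [if_neg (by decide)]; norm_num] at h2
  norm_num [y'] at h2

end Cex6

/-- There exist a flow network, a lifted graph and
`(y,y') ∈ [0,1]^E × [0,1]^{E'}` satisfying all lifted path-induced cut inequalities but
violating some symmetric lifted path-induced cut inequality. -/
theorem sym_lifted_path_cut_ineqs_strictly_improve :
    ∃ (n : ℕ) (E E' : Finset (Fin n × Fin n)) (s t : Fin n)
      (y y' : Fin n × Fin n → ℝ),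
      IsFlowNetwork E s t ∧ IsLiftedGraph E' s t ∧ InUnitBox E y ∧ InUnitBox E' y' ∧
      LiftedPathCutIneqs E E' y y' ∧ ¬ SymLiftedPathCutIneqs E E' y y' := by
  refine ⟨6, Cex6.E0, Cex6.E1, 0, 5, Cex6.y, Cex6.y', ?_, ?_, ?_, ?_,
    Cex6.forward, Cex6.violation⟩
  · refine ⟨?_, ?_, ?_⟩
    · intro v w hvw hr
      have h1 : v < w := Cex6.edge_lt (v, w) hvw
      have h2 : w ≤ v := (Cex6.reach_iff w v).1 hr
      exact absurd (lt_of_lt_of_le h1 h2) (lt_irrefl v)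
    · exact fun v => (Cex6.reach_iff 0 v).2 (Fin.zero_le v)
    · intro v
      refine (Cex6.reach_iff v 5).2 ?_
      have : ∀ a : Fin 6, a ≤ 5 := by decide
      exact this v
  · exact fun e he => (by decide :
      ∀ e ∈ Cex6.E1, e.1 ≠ 0 ∧ e.1 ≠ 5 ∧ e.2 ≠ 0 ∧ e.2 ≠ 5) e he
  · intro e _
    have : Cex6.Y e = 1 ∨ Cex6.Y e = 2 := by
      unfold Cex6.Y; split <;> simp
    rcases this with h | h <;> rw [Cex6.y, h] <;> norm_num
  · intro e _
    rw [Cex6.y']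
    norm_num
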